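/- Let z ∈ ℂ_p \ {0} with |z−1|_p ≥ 1 and |z^{-1}−1|_p ≥ 1. For k ≥ 2, ∫_{ℤ_p} 1 dμ_{k,1/z} = (−1)^k ∫_{ℤ_p} 1 dμ_{k,z}; and for k = 1, ∫_{ℤ_p} 1 dμ_{1,1/z} = −1 − ∫_{ℤ_p} 1 dμ_{1,z}. Equivalently: β_k(1/z) = (−1)^k β_k(z) for k ≥ 2, and β_1(1/z) = −1 − β_1(z). -/

import Mathlib

open PowerSeries

private lemma twistedBernoulli_key {K : Type*} [Field K] [CharZero K]
    (z : K) (hz0 : z ≠ 0) (hz1 : z ≠ 1) :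
    X * (C (R := K) z⁻¹ * exp K - 1)⁻¹ =
      rescale (-1) (X * (C (R := K) z * exp K - 1)⁻¹) - X := by
  have hzi1 : z⁻¹ ≠ 1 := fun h => hz1 (by field_simp at h; simp [h])
  set E : K⟦X⟧ := exp K with hE
  set Eb : K⟦X⟧ := rescale (-1) E with hEb
  set B : K⟦X⟧ := C (R := K) z * E - 1 with hB
  set B' : K⟦X⟧ := C (R := K) z * Eb - 1 with hB'
  set A : K⟦X⟧ := C (R := K) z⁻¹ * E - 1 with hA
  have hcE : constantCoeff (R := K) E = 1 := constantCoeff_exp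
  have hCres : ∀ r : K, rescale (-1 : K) (C (R := K) r) = C (R := K) r := by
    intro r
    ext n
    rw [coeff_rescale, coeff_C]
    rcases eq_or_ne n 0 with h | h <;> simp [h]
  have hcEb : constantCoeff (R := K) Eb = 1 := by
    rw [← coeff_zero_eq_constantCoeff, hEb, coeff_rescale, pow_zero, one_mul,
      coeff_zero_eq_constantCoeff, hcE]
  have hcB : constantCoeff (R := K) B ≠ 0 := by
    simp [hB, hcE, sub_ne_zero.mpr hz1]
  have hcB' : constantCoeff (R := K) B' ≠ 0 := by
    simp [hB', hcEb, sub_ne_zero.mpr hz1]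
  have hcA : constantCoeff (R := K) A ≠ 0 := by
    simp [hA, hcE, sub_ne_zero.mpr hzi1]
  have h1 : C (R := K) z⁻¹ * C (R := K) z = 1 := by
    rw [← map_mul, inv_mul_cancel₀ hz0, map_one]
  have h2 : E * Eb = 1 := by
    simpa [evalNegHom, hE, hEb] using exp_mul_exp_neg_eq_one (A := K)
  have h3 : B'⁻¹ * B' = 1 := by
    rw [mul_comm]; exact PowerSeries.mul_inv_cancel _ hcB'
  have hresB : rescale (-1) B = B' := by
    simp [hB, hB', hEb, map_sub, map_mul, map_one, hCres]
  have hrinv : rescale (-1) (B⁻¹) = B'⁻¹ := by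
    rw [eq_inv_iff_mul_eq_one hcB']
    rw [← hresB, ← map_mul, mul_comm, PowerSeries.mul_inv_cancel _ hcB, map_one]
  have hTA : (-(X * B'⁻¹) - X) * A = X := by
    rw [hA, hB']
    have h3' : B'⁻¹ * (C (R := K) z * Eb - 1) = 1 := by rw [← hB']; exact h3
    linear_combination (X * C (R := K) z⁻¹ * E) * h3' + (-X * B'⁻¹ * E * Eb) * h1 +
      (-X * B'⁻¹) * h2
  have hmain : X * A⁻¹ = -(X * B'⁻¹) - X := by
    calc X * A⁻¹ = ((-(X * B'⁻¹) - X) * A) * A⁻¹ := by rw [hTA]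
    _ = (-(X * B'⁻¹) - X) * (A * A⁻¹) := by ring
    _ = -(X * B'⁻¹) - X := by rw [PowerSeries.mul_inv_cancel _ hcA, mul_one]
  rw [hmain, map_mul, rescale_neg_one_X, hrinv]
  ring

/-- The twisted Bernoulli polynomial `β_k(x,y)`, defined (for `y ≠ 1`) by the
exponential generating function `t·e^{xt}/(y·e^t − 1) = Σ_{k≥0} β_k(x,y) t^k/k!`. -/
noncomputable def twistedBernoulli {K : Type*} [Field K] [CharZero K] (k : ℕ) (x y : K) : K :=
  (k.factorial : K) *
    PowerSeries.coeff (R := K) k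
      (PowerSeries.X * PowerSeries.rescale x (PowerSeries.exp K) *
        (PowerSeries.C (R := K) y * PowerSeries.exp K - 1)⁻¹)

private lemma twistedBernoulli_zero_eq {K : Type*} [Field K] [CharZero K] (k : ℕ) (y : K) :
    twistedBernoulli k 0 y =
      (k.factorial : K) * PowerSeries.coeff (R := K) k (X * (C (R := K) y * exp K - 1)⁻¹) := by
  unfold twistedBernoulli
  rw [rescale_zero]
  simp [constantCoeff_exp]

/-- For `z ≠ 0` with `|z−1| ≥ 1` and `|z⁻¹−1| ≥ 1`:
`∫_{ℤ_p} 1 dμ_{k,1/z} = (−1)^k ∫_{ℤ_p} 1 dμ_{k,z}` for `k ≥ 2`, and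
`∫_{ℤ_p} 1 dμ_{1,1/z} = −1 − ∫_{ℤ_p} 1 dμ_{1,z}`; equivalently,
`β_k(1/z) = (−1)^k β_k(z)` for `k ≥ 2` and `β_1(1/z) = −1 − β_1(z)`. -/
theorem twistedBernoulli_number_inv
    {K : Type*} [NormedField K] [IsUltrametricDist K] [CharZero K]
    (p : ℕ) (hp : p.Prime) (hnorm : ‖(p : K)‖ = (p : ℝ)⁻¹)
    (z : K) (hz0 : z ≠ 0) (hz : 1 ≤ ‖z - 1‖) (hzinv : 1 ≤ ‖z⁻¹ - 1‖) :
    (∀ k : ℕ, 2 ≤ k →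
      twistedBernoulli k 0 z⁻¹ = (-1 : K) ^ k * twistedBernoulli k 0 z) ∧
    twistedBernoulli 1 0 z⁻¹ = -1 - twistedBernoulli 1 0 z := by
  have hz1 : z ≠ 1 := by
    intro h; rw [h] at hz; simp at hz; linarith
  have hkey := twistedBernoulli_key z hz0 hz1
  have hcoeff : ∀ k : ℕ, PowerSeries.coeff (R := K) k (X * (C (R := K) z⁻¹ * exp K - 1)⁻¹) =
      (-1 : K) ^ k * PowerSeries.coeff (R := K) k (X * (C (R := K) z * exp K - 1)⁻¹)
        - PowerSeries.coeff (R := K) k (X : K⟦X⟧) := by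
    intro k
    rw [hkey, map_sub, coeff_rescale]
  constructor
  · intro k hk
    rw [twistedBernoulli_zero_eq, twistedBernoulli_zero_eq, hcoeff k, coeff_X,
      if_neg (by omega)]
    ring
  · rw [twistedBernoulli_zero_eq, twistedBernoulli_zero_eq, hcoeff 1, coeff_X, if_pos rfl]
    simp
    ring
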